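/- Let M be a Hausdorff, finite-dimensional smooth manifold without boundary modeled on ℝ^d (a C² manifold suffices), let N ∈ ℕ, and let V : Fin N → (Π x : M, TangentSpace (𝓡 d) x) be vector fields that are C¹ as sections of the tangent bundle. Let K ⊆ M be compact. Then there exists η > 0 such that for every x₀ ∈ K and every a : Fin N → ℝ with ∑ i, (a i)² < η², there exists γ : ℝ → M with γ 0 = x₀ and IsIntegralCurveOn γ (fun x => ∑ i, a i • V i x) (Set.Icc (0 : ℝ) 1); that is, the flow e^{a₁V₁ + ⋯ + a_N V_N} x₀ exists up to time 1. -/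

import Mathlib

open scoped Manifold Topology NNReal
open Function Set

/-- The notion `IsIntegralCurveOn` of Mathlib (December 2024) for curves in a manifold:
`γ` has derivative `v (γ t)` at every `t ∈ s` (a full, not within-`s`, derivative). -/
def IsIntegralCurveOnMfld {E : Type*} [NormedAddCommGroup E] [NormedSpace ℝ E]
    {H : Type*} [TopologicalSpace H] {I : ModelWithCorners ℝ E H}
    {M : Type*} [TopologicalSpace M] [ChartedSpace H M]
    (γ : ℝ → M) (v : (x : M) → TangentSpace I x) (s : Set ℝ) : Prop :=
  ∀ t ∈ s, HasMFDerivAt 𝓘(ℝ, ℝ) I γ t ((1 : ℝ →L[ℝ] ℝ).smulRight <| v (γ t))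

/-! ### Auxiliary lemmas -/

/-- Picard–Lindelöf with the extra conclusion that the solution stays in the closed ball. -/
theorem my_pl {E : Type*} [NormedAddCommGroup E] [NormedSpace ℝ E] [CompleteSpace E]
    {v : ℝ → E → E} {tMin t₀ tMax : ℝ} (ht₀ : t₀ ∈ Icc tMin tMax) (x₀ : E) {a r L K : ℝ≥0}
    (hpl : IsPicardLindelof v (⟨t₀, ht₀⟩ : Icc tMin tMax) x₀ a r L K) :
    ∃ f : ℝ → E, f t₀ = x₀ ∧ ∀ t ∈ Icc tMin tMax,
      f t ∈ Metric.closedBall x₀ a ∧ HasDerivWithinAt f (v t (f t)) (Icc tMin tMax) t := by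
  have hx : x₀ ∈ Metric.closedBall x₀ (r : ℝ) := Metric.mem_closedBall_self r.2
  obtain ⟨α, hα⟩ := ODE.FunSpace.exists_isFixedPt_next hpl hx
  have hcont : ContinuousOn (uncurry v) (Icc tMin tMax ×ˢ Metric.closedBall x₀ a) :=
    continuousOn_prod_of_continuousOn_lipschitzOnWith' (uncurry v) K hpl.lipschitzOnWith
      hpl.continuousOn
  have hmem : ∀ t, α.compProj t ∈ Metric.closedBall x₀ a := fun t =>
    α.compProj_mem_closedBall hpl.mul_max_le
  have heq : ∀ t ∈ Icc tMin tMax, α.compProj t = ODE.picard v t₀ x₀ α.compProj t := by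
    intro t ht
    rw [ODE.FunSpace.compProj_of_mem ht]
    conv_lhs => rw [← hα.eq]
    rfl
  refine ⟨α.compProj, ?_, fun t ht => ⟨hmem t, ?_⟩⟩
  · rw [heq t₀ ht₀]; simp
  · have h := ODE.hasDerivWithinAt_picard_Icc ht₀ hcont α.continuous_compProj.continuousOn
      (fun t _ => hmem t) x₀ ht
    exact h.congr (fun y hy => heq y hy) (heq t ht)

/-- If `f` is a curve in the chart at `p` whose (full) derivative at each `t ∈ s` is the
coordinate representation of `v`, then `(extChartAt I p).symm ∘ f` is an integral curve of `v`
on `s`.  This is extracted from the proof of `exists_isIntegralCurveAt_of_contMDiffAt`. -/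
theorem isIntegralCurveOn_of_chart
    {E : Type*} [NormedAddCommGroup E] [NormedSpace ℝ E]
    {H : Type*} [TopologicalSpace H] {I : ModelWithCorners ℝ E H}
    {M : Type*} [TopologicalSpace M] [ChartedSpace H M] [IsManifold I (⊤ : ℕ∞) M]
    (v : (x : M) → TangentSpace I x) (p : M) (f : ℝ → E) (s : Set ℝ)
    (hmem : ∀ t ∈ s, f t ∈ interior (extChartAt I p).target)
    (hd : ∀ t ∈ s, HasDerivAt f
      (tangentCoordChange I ((extChartAt I p).symm (f t)) p ((extChartAt I p).symm (f t))
        (v ((extChartAt I p).symm (f t)))) t) :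
    IsIntegralCurveOnMfld ((extChartAt I p).symm ∘ f) v s := by
  intro t ht
  set xₜ : M := (extChartAt I p).symm (f t) with hxₜ
  have h : HasDerivAt f (x := t) <| fderivWithin ℝ (extChartAt I p ∘ (extChartAt I xₜ).symm)
    (range I) (extChartAt I xₜ xₜ) (v xₜ) := by
    rw [← tangentCoordChange_def]; exact hd t ht
  have hf3 := hmem t ht
  have hf3' := mem_of_mem_of_subset hf3 interior_subset
  have hft1 := mem_preimage.mp <|
    mem_of_mem_of_subset hf3' (extChartAt I p).target_subset_preimage_source
  have hft2 := mem_extChartAt_source (I := I) xₜ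
  refine ⟨(continuousAt_extChartAt_symm'' hf3').comp h.continuousAt,
    HasDerivWithinAt.hasFDerivWithinAt (F := TangentSpace I xₜ) ?_⟩
  simp only [mfld_simps, hasDerivWithinAt_univ]
  change HasDerivWithinAt (((extChartAt I xₜ ∘ (extChartAt I p).symm) ∘ f) : ℝ → E) (v xₜ : E)
    univ t
  apply HasDerivAt.hasDerivWithinAt
  show HasDerivAt ((extChartAt I xₜ ∘ (extChartAt I p).symm) ∘ f) (v xₜ) t
  erw [← tangentCoordChange_self (I := I) (x := xₜ) (z := xₜ) (v := v xₜ) hft2,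
    ← tangentCoordChange_comp (x := p) ⟨⟨hft2, hft1⟩, hft2⟩]
  apply HasFDerivAt.comp_hasDerivAt _ _ h
  apply HasFDerivWithinAt.hasFDerivAt (s := range I) _ <|
    mem_nhds_iff.mpr ⟨interior (extChartAt I p).target,
      subset_trans interior_subset (extChartAt_target_subset_range ..),
      isOpen_interior, hf3⟩
  rw [← (extChartAt I p).right_inv hf3']
  exact hasFDerivWithinAt_tangentCoordChange ⟨hft1, hft2⟩

/-- The coordinate representation (in the chart at `p`) of a vector field `V`. -/
noncomputable def wrep {d : ℕ} {M : Type*} [TopologicalSpace M]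
    [ChartedSpace (EuclideanSpace ℝ (Fin d)) M] [IsManifold (𝓡 d) (⊤ : ℕ∞) M]
    (V : Π x : M, TangentSpace (𝓡 d) x) (p : M) :
    EuclideanSpace ℝ (Fin d) → EuclideanSpace ℝ (Fin d) :=
  fun y => (extChartAt (𝓡 d).tangent (⟨p, V p⟩ : TangentBundle (𝓡 d) M)
    ((fun x => (⟨x, V x⟩ : TangentBundle (𝓡 d) M)) ((extChartAt (𝓡 d) p).symm y))).2

theorem wrep_eq {d : ℕ} {M : Type*} [TopologicalSpace M]
    [ChartedSpace (EuclideanSpace ℝ (Fin d)) M] [IsManifold (𝓡 d) (⊤ : ℕ∞) M]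
    (V : Π x : M, TangentSpace (𝓡 d) x) (p : M) (y : EuclideanSpace ℝ (Fin d)) :
    wrep V p y = tangentCoordChange (𝓡 d) ((extChartAt (𝓡 d) p).symm y) p
      ((extChartAt (𝓡 d) p).symm y) (V ((extChartAt (𝓡 d) p).symm y)) := rfl

theorem contDiffAt_wrep {d : ℕ} {M : Type*} [TopologicalSpace M]
    [ChartedSpace (EuclideanSpace ℝ (Fin d)) M] [IsManifold (𝓡 d) (⊤ : ℕ∞) M]
    {V : Π x : M, TangentSpace (𝓡 d) x}
    (hV : ContMDiff (𝓡 d) (𝓡 d).tangent 1 (fun x => (⟨x, V x⟩ : TangentBundle (𝓡 d) M)))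
    (p : M) : ContDiffAt ℝ 1 (wrep V p) (extChartAt (𝓡 d) p p) := by
  have hv := (hV p)
  rw [contMDiffAt_iff] at hv
  have := (hv.2.contDiffAt (range_mem_nhds_isInteriorPoint
    (BoundarylessManifold.isInteriorPoint (I := 𝓡 d)))).snd
  exact_mod_cast this

theorem LipschitzOnWith.weaken' {α β : Type*} [PseudoEMetricSpace α] [PseudoEMetricSpace β]
    {K K' : ℝ≥0} {f : α → β} {s : Set α} (h : LipschitzOnWith K f s) (hK : K ≤ K') :
    LipschitzOnWith K' f s := fun x hx y hy =>
  (h hx hy).trans (mul_le_mul_left (by exact_mod_cast hK) _)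

/-- Around each point `p`, there is a ball (in chart coordinates) contained in the chart target
on which all the coordinate representations `wrep (V i) p` are Lipschitz and bounded. -/
theorem exists_chart_data {d : ℕ} {M : Type*} [TopologicalSpace M]
    [ChartedSpace (EuclideanSpace ℝ (Fin d)) M] [IsManifold (𝓡 d) (⊤ : ℕ∞) M]
    {N : ℕ} {V : Fin N → (Π x : M, TangentSpace (𝓡 d) x)}
    (hV : ∀ i, ContMDiff (𝓡 d) (𝓡 d).tangent 1
      (fun x => (⟨x, V i x⟩ : TangentBundle (𝓡 d) M)))
    (p : M) :
    ∃ (r : ℝ) (L : ℝ≥0) (C : ℝ), 0 < r ∧ 0 ≤ C ∧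
      Metric.closedBall (extChartAt (𝓡 d) p p) (2 * r) ⊆
        interior (extChartAt (𝓡 d) p).target ∧
      ∀ i, LipschitzOnWith L (wrep (V i) p)
          (Metric.closedBall (extChartAt (𝓡 d) p p) (2 * r)) ∧
        ∀ y ∈ Metric.closedBall (extChartAt (𝓡 d) p p) (2 * r), ‖wrep (V i) p y‖ ≤ C := by
  set c : EuclideanSpace ℝ (Fin d) := extChartAt (𝓡 d) p p with hc
  have hcd : ∀ i, ContDiffAt ℝ 1 (wrep (V i) p) c := fun i => contDiffAt_wrep (hV i) p
  choose L s hs hlip using fun i => (hcd i).exists_lipschitzOnWith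
  have hbd : ∀ i, {y | ‖wrep (V i) p y‖ < ‖wrep (V i) p c‖ + 1} ∈ 𝓝 c := by
    intro i
    exact (hcd i).continuousAt.norm.eventually_lt continuousAt_const (lt_add_one _)
  have htgt : interior (extChartAt (𝓡 d) p).target ∈ 𝓝 c :=
    isOpen_interior.mem_nhds ((ModelWithCorners.isInteriorPoint_iff).mp
      (BoundarylessManifold.isInteriorPoint (I := 𝓡 d)))
  have hS : (interior (extChartAt (𝓡 d) p).target ∩
      ⋂ i, (s i ∩ {y | ‖wrep (V i) p y‖ < ‖wrep (V i) p c‖ + 1})) ∈ 𝓝 c :=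
    Filter.inter_mem htgt (Filter.iInter_mem.mpr fun i => Filter.inter_mem (hs i) (hbd i))
  obtain ⟨ε, hε, hball⟩ := Metric.mem_nhds_iff.mp hS
  refine ⟨ε / 3, Finset.univ.sum L, ∑ i, (‖wrep (V i) p c‖ + 1), by positivity,
    Finset.sum_nonneg fun i _ => by positivity, ?_, fun i => ⟨?_, ?_⟩⟩
  · intro y hy
    exact (hball (lt_of_le_of_lt (Metric.mem_closedBall.mp hy) (by linarith))).1
  · refine ((hlip i).mono ?_).weaken' (Finset.single_le_sum (f := L) (fun j _ => zero_le)
      (Finset.mem_univ i))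
    intro y hy
    have := hball (lt_of_le_of_lt (Metric.mem_closedBall.mp hy) (by linarith))
    exact (mem_iInter.mp this.2 i).1
  · intro y hy
    have hmem := hball (lt_of_le_of_lt (Metric.mem_closedBall.mp hy) (by linarith : 2 * (ε/3) < ε))
    have h2 : ‖wrep (V i) p y‖ < ‖wrep (V i) p c‖ + 1 := (mem_iInter.mp hmem.2 i).2
    calc ‖wrep (V i) p y‖ ≤ ‖wrep (V i) p c‖ + 1 := h2.le
    _ ≤ ∑ j, (‖wrep (V j) p c‖ + 1) :=
      Finset.single_le_sum (f := fun j => ‖wrep (V j) p c‖ + 1) (fun j _ => by positivity)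
        (Finset.mem_univ i)

theorem lipschitzOnWith_sum_smul {E : Type*} [NormedAddCommGroup E] [NormedSpace ℝ E]
    {N : ℕ} (a : Fin N → ℝ) (w : Fin N → E → E) (L : ℝ≥0) (S : Set E)
    (h : ∀ i, LipschitzOnWith L (w i) S) :
    LipschitzOnWith ((∑ i, ‖a i‖₊) * L) (fun y => ∑ i, a i • w i y) S := by
  rw [lipschitzOnWith_iff_dist_le_mul]
  intro x hx y hy
  have key : ∀ i : Fin N, dist (w i x) (w i y) ≤ (L : ℝ) * dist x y := fun i =>
    (lipschitzOnWith_iff_dist_le_mul.mp (h i)) x hx y hy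
  calc dist (∑ i, a i • w i x) (∑ i, a i • w i y)
      = ‖∑ i, (a i • w i x - a i • w i y)‖ := by
        rw [dist_eq_norm, Finset.sum_sub_distrib]
    _ ≤ ∑ i, ‖a i • w i x - a i • w i y‖ := norm_sum_le _ _
    _ = ∑ i, ‖a i‖ * ‖w i x - w i y‖ := by
        refine Finset.sum_congr rfl fun i _ => ?_
        rw [← smul_sub, norm_smul]
    _ ≤ ∑ i, ‖a i‖ * ((L : ℝ) * dist x y) := by
        refine Finset.sum_le_sum fun i _ => mul_le_mul_of_nonneg_left ?_ (norm_nonneg _)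
        rw [← dist_eq_norm]; exact key i
    _ = ((∑ i, ‖a i‖₊ : ℝ≥0) : ℝ) * (L : ℝ) * dist x y := by
        push_cast
        rw [← Finset.sum_mul]
        ring
    _ = (((∑ i, ‖a i‖₊) * L : ℝ≥0) : ℝ) * dist x y := by push_cast; ring

/-- uniform existence time for flows of `C¹` vector fields over a compact
set.  Let `M` be a Hausdorff smooth manifold without boundary modeled on `ℝ^d`, let
`V₁, …, V_N` be `C¹` vector fields on `M`, and let `K ⊆ M` be compact.  Then there is
`η > 0` such that for every `x₀ ∈ K` and every `a ∈ ℝ^N` with `∑ i, (a i)² < η²` the flow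
`e^{a₁V₁ + ⋯ + a_N V_N} x₀` exists up to time 1. -/
theorem exists_uniform_flow_time
    (d : ℕ) (M : Type*) [TopologicalSpace M] [T2Space M]
    [ChartedSpace (EuclideanSpace ℝ (Fin d)) M]
    [IsManifold (𝓡 d) (⊤ : ℕ∞) M]
    (N : ℕ) (V : Fin N → (Π x : M, TangentSpace (𝓡 d) x))
    (hV : ∀ i, ContMDiff (𝓡 d) (𝓡 d).tangent 1
      (fun x => (⟨x, V i x⟩ : TangentBundle (𝓡 d) M)))
    (K : Set M) (hK : IsCompact K) :
    ∃ η : ℝ, 0 < η ∧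
      ∀ x₀ ∈ K, ∀ a : Fin N → ℝ, (∑ i, (a i) ^ 2) < η ^ 2 →
        ∃ γ : ℝ → M, γ 0 = x₀ ∧
          IsIntegralCurveOnMfld γ (fun x => ∑ i, a i • V i x) (Set.Icc (0 : ℝ) 1) := by
  classical
  -- choose chart data at every point
  choose r L C hr hC hsub hdata using fun p : M => exists_chart_data hV p
  -- an open cover of `K`
  set U : M → Set M := fun p => (extChartAt (𝓡 d) p).source ∩
    extChartAt (𝓡 d) p ⁻¹' (Metric.ball (extChartAt (𝓡 d) p p) (r p)) with hU
  have hUnhds : ∀ p ∈ K, U p ∈ 𝓝 p := by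
    intro p _
    refine Filter.inter_mem (extChartAt_source_mem_nhds p)
      ((continuousAt_extChartAt p).preimage_mem_nhds (Metric.ball_mem_nhds _ (hr p)))
  obtain ⟨T, hTK, hTcover⟩ := hK.elim_nhds_subcover U hUnhds
  -- the uniform constant
  set η : ℝ := if h : T.Nonempty then T.inf' h (fun p => r p / (2 * (N * C p + 1))) else 1
    with hηdef
  have hηpos : 0 < η := by
    rw [hηdef]
    split_ifs with h
    · rw [Finset.lt_inf'_iff]
      intro p _
      have := hr p
      have := hC p
      positivity
    · norm_num
  refine ⟨η, hηpos, ?_⟩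
  intro x₀ hx₀ a ha
  -- find the chart containing `x₀`
  obtain ⟨j, hjT, hx₀U⟩ := Set.mem_iUnion₂.mp (hTcover hx₀)
  have hηle : η ≤ r j / (2 * (N * C j + 1)) := by
    rw [hηdef, dif_pos ⟨j, hjT⟩]
    exact Finset.inf'_le _ hjT
  -- bounds on `a`
  have haabs : ∀ i, |a i| ≤ η := by
    intro i
    have h1 : (a i) ^ 2 ≤ ∑ k, (a k) ^ 2 :=
      Finset.single_le_sum (f := fun k => (a k) ^ 2) (fun k _ => sq_nonneg _)
        (Finset.mem_univ i)
    nlinarith [sq_abs (a i), abs_nonneg (a i), hηpos]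
  have hasum : ∑ i, |a i| ≤ N * η := by
    calc ∑ i, |a i| ≤ ∑ _i : Fin N, η := Finset.sum_le_sum fun i _ => haabs i
    _ = N * η := by
        rw [Finset.sum_const, Finset.card_univ, Fintype.card_fin, nsmul_eq_mul]
  -- set up Picard–Lindelöf in the chart at `j`
  set c := extChartAt (𝓡 d) j j with hcdef
  set x₀' := extChartAt (𝓡 d) j x₀ with hx₀'def
  have hx₀src : x₀ ∈ (extChartAt (𝓡 d) j).source := hx₀U.1
  have hx₀ball : dist x₀' c < r j := by
    have := hx₀U.2
    simpa [hx₀'def, hcdef, Metric.mem_ball] using this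
  have hball2 : Metric.closedBall x₀' (r j) ⊆ Metric.closedBall c (2 * r j) := by
    refine Metric.closedBall_subset_closedBall' ?_
    linarith
  set g : EuclideanSpace ℝ (Fin d) → EuclideanSpace ℝ (Fin d) :=
    fun y => ∑ i, a i • wrep (V i) j y with hg
  have hgbound : ∀ y ∈ Metric.closedBall x₀' (r j), ‖g y‖ ≤ N * η * C j := by
    intro y hy
    have hy2 := hball2 hy
    calc ‖g y‖ ≤ ∑ i, ‖a i • wrep (V i) j y‖ := norm_sum_le _ _
    _ = ∑ i, |a i| * ‖wrep (V i) j y‖ := by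
        refine Finset.sum_congr rfl fun i _ => ?_
        rw [norm_smul, Real.norm_eq_abs]
    _ ≤ ∑ i, |a i| * C j := by
        refine Finset.sum_le_sum fun i _ => mul_le_mul_of_nonneg_left ?_ (abs_nonneg _)
        exact (hdata j i).2 y hy2
    _ = (∑ i, |a i|) * C j := by rw [Finset.sum_mul]
    _ ≤ N * η * C j := mul_le_mul_of_nonneg_right hasum (hC j)
  have hpl : IsPicardLindelof (fun _ y => g y) (tmin := -1) (tmax := 2)
      (⟨0, by norm_num⟩ : Icc (-1 : ℝ) 2) x₀'
      ⟨r j, (hr j).le⟩ 0 ⟨N * η * C j, by have := hC j; positivity⟩ ((∑ i, ‖a i‖₊) * L j) := by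
    refine IsPicardLindelof.of_time_independent (fun y hy => hgbound y hy) ?_ ?_
    · exact lipschitzOnWith_sum_smul a _ (L j) _
        (fun i => ((hdata j i).1.mono hball2))
    · have h2 : max (2 - 0 : ℝ) (0 - (-1)) = 2 := by norm_num
      show (N * η * C j : ℝ) * max ((2 : ℝ) - 0) (0 - (-1)) ≤ r j - 0
      rw [h2, sub_zero]
      have hd : (0 : ℝ) < 2 * (N * C j + 1) := by
        have := hC j; positivity
      have hη2 : η * (2 * (N * C j + 1)) ≤ r j := (le_div_iff₀ hd).mp hηle
      nlinarith [hC j, hηpos]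
  obtain ⟨f, hf0, hfsol⟩ := my_pl _ x₀' hpl
  -- the integral curve
  refine ⟨(extChartAt (𝓡 d) j).symm ∘ f, ?_, ?_⟩
  · simp only [Function.comp_apply, hf0]
    exact (extChartAt (𝓡 d) j).left_inv hx₀src
  · have hsub01 : Icc (0 : ℝ) 1 ⊆ Icc (-1 : ℝ) 2 := Icc_subset_Icc (by norm_num) (by norm_num)
    have hmem : ∀ t ∈ Icc (0 : ℝ) 1, f t ∈ interior (extChartAt (𝓡 d) j).target := by
      intro t ht
      exact hsub j (hball2 ((hfsol t (hsub01 ht)).1))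
    refine isIntegralCurveOn_of_chart _ j f _ hmem ?_
    intro t ht
    have hder : HasDerivAt f (g (f t)) t := by
      refine ((hfsol t (hsub01 ht)).2).hasDerivAt (Icc_mem_nhds ?_ ?_)
      · linarith [ht.1]
      · linarith [ht.2]
    refine hder.congr_deriv ?_
    symm
    -- identify the coordinate representation of the combined vector field
    set xₜ := (extChartAt (𝓡 d) j).symm (f t) with hxₜ
    have : ∀ i, wrep (V i) j (f t) = tangentCoordChange (𝓡 d) xₜ j xₜ (V i xₜ) :=
      fun i => wrep_eq (V i) j (f t)
    calc tangentCoordChange (𝓡 d) xₜ j xₜ (∑ i, a i • V i xₜ)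
        = ∑ i, a i • tangentCoordChange (𝓡 d) xₜ j xₜ (V i xₜ) := by
          exact (map_sum (tangentCoordChange (𝓡 d) xₜ j xₜ) (fun i => a i • V i xₜ) Finset.univ).trans
            (Finset.sum_congr rfl fun i _ => map_smul _ _ _)
    _ = g (f t) := by
          rw [hg]
          exact Finset.sum_congr rfl fun i _ => by rw [this i]
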